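/- Let D, A be bounded operators on a complex Hilbert space H, write A = T + iS̃ and D = D₁ + iD₂ with T, S̃, D₁, D₂ self-adjoint (real and imaginary parts). Let 𝒜(x₁,x₂) = (−Dx₁ − Ax₂, x₁) and for k > 0 define the form [x,y] = ⟨Tx₂, y₂⟩ + k⟨D₁x₂, y₂⟩ − k²⟨x₂, y₂⟩ + ⟨x₁ + kx₂, y₁ + ky₂⟩ on H × H. Then for all x = (x₁,x₂): −(1/k)·Re[𝒜x, x] = (1/k)⟨D₁x₁, x₁⟩ − ‖x₁‖² + ⟨Tx₂, x₂⟩ + Im⟨((1/k)S̃ − D₂)x₁, x₂⟩. -/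

import Mathlib

open scoped InnerProductSpace

/-- the key algebraic identity
`-(1/k)·Re[𝒜x, x] = (1/k)⟨D₁x₁,x₁⟩ - ‖x₁‖² + ⟨Tx₂,x₂⟩ + Im⟨((1/k)S̃ - D₂)x₁, x₂⟩`,
where `[u,v] = ⟨Tu₂,v₂⟩ + k⟨D₁u₂,v₂⟩ - k²⟨u₂,v₂⟩ + ⟨u₁+ku₂, v₁+kv₂⟩` and
`𝒜(x₁,x₂) = (-Dx₁ - Ax₂, x₁)`.  (Inner products are written in the mathematical
convention `⟨u,v⟩ = ⟪v, u⟫_ℂ`, linear in the first argument.) -/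
theorem companion_form_identity {H : Type*} [NormedAddCommGroup H]
    [InnerProductSpace ℂ H] [CompleteSpace H]
    (T S D₁ D₂ A D : H →L[ℂ] H)
    (hT : IsSelfAdjoint T) (hS : IsSelfAdjoint S)
    (hD₁ : IsSelfAdjoint D₁) (hD₂ : IsSelfAdjoint D₂)
    (hA : A = T + Complex.I • S) (hD : D = D₁ + Complex.I • D₂)
    (k : ℝ) (hk : 0 < k) :
    ∀ x₁ x₂ : H,
      -(1 / k) *
        ((⟪x₂, T x₁⟫_ℂ + (k : ℂ) * ⟪x₂, D₁ x₁⟫_ℂ - (k : ℂ) ^ 2 * ⟪x₂, x₁⟫_ℂ +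
          ⟪x₁ + k • x₂, (-D x₁ - A x₂) + k • x₁⟫_ℂ).re) =
      (1 / k) * (⟪x₁, D₁ x₁⟫_ℂ).re - ‖x₁‖ ^ 2 + (⟪x₂, T x₂⟫_ℂ).re +
        (⟪x₂, ((1 / k : ℂ) • S - D₂) x₁⟫_ℂ).im := by
  intro x₁ x₂
  have sym : ∀ (B : H →L[ℂ] H), IsSelfAdjoint B → ∀ u v : H,
      ⟪u, B v⟫_ℂ = starRingEnd ℂ ⟪v, B u⟫_ℂ := by
    intro B hB u v
    rw [← inner_conj_symm, ← ContinuousLinearMap.adjoint_inner_right, hB.adjoint_eq]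
  have mk : ∀ (B : H →L[ℂ] H) (hB : IsSelfAdjoint B) (u v : H),
      (⟪u, B v⟫_ℂ).re = (⟪v, B u⟫_ℂ).re ∧ (⟪u, B v⟫_ℂ).im = -(⟪v, B u⟫_ℂ).im := by
    intro B hB u v
    rw [sym B hB u v]
    exact ⟨rfl, rfl⟩
  obtain ⟨h1r, h1i⟩ := mk T hT x₁ x₂
  obtain ⟨h2r, h2i⟩ := mk S hS x₁ x₂
  obtain ⟨-, h3i⟩ := mk D₁ hD₁ x₁ x₁
  obtain ⟨-, h4i⟩ := mk D₂ hD₂ x₁ x₁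
  obtain ⟨-, h5i⟩ := mk S hS x₂ x₂
  have h3i' : (⟪x₁, D₁ x₁⟫_ℂ).im = 0 := by linarith
  have h4i' : (⟪x₁, D₂ x₁⟫_ℂ).im = 0 := by linarith
  have h5i' : (⟪x₂, S x₂⟫_ℂ).im = 0 := by linarith
  have h6 : (⟪x₁, (x₁ : H)⟫_ℂ).re = ‖x₁‖ ^ 2 := by
    simpa using inner_self_eq_norm_sq (𝕜 := ℂ) x₁
  have hsm : ∀ y : H, k • y = (k : ℂ) • y := fun y =>
    (algebraMap_smul ℂ k y).symm
  subst hA hD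
  simp only [hsm]
  simp only [ContinuousLinearMap.add_apply, ContinuousLinearMap.sub_apply,
    ContinuousLinearMap.smul_apply, inner_add_left, inner_add_right, inner_sub_right,
    inner_neg_right, inner_smul_left, inner_smul_right, inner_smul_real_left,
    inner_smul_real_right, Complex.real_smul,
    Complex.add_re, Complex.sub_re, Complex.neg_re, Complex.mul_re, Complex.mul_im,
    Complex.add_im, Complex.sub_im, Complex.neg_im, Complex.I_re, Complex.I_im,
    Complex.ofReal_re, Complex.ofReal_im, ← Complex.ofReal_pow,
    Complex.div_re, Complex.div_im, Complex.one_re, Complex.one_im, Complex.normSq_ofReal,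
    Complex.smul_re, Complex.smul_im, Complex.conj_ofReal]
  field_simp
  ring_nf
  nlinarith [h1r, h1i, h2r, h2i, h3i', h4i', h5i', h6, hk, sq_nonneg k]
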